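/- Let a, b, c ∈ ℝ^d and let x, y ∈ ℝ^d. Then the Fréchet distance between the three-vertex polygonal curve (a, b, c) and the two-vertex curve (x, y) is at least (1/2) · dist(b, [a, c]), where [a,c] denotes the closed line segment from a to c and dist(b, [a,c]) is the distance from b to that segment. -/

import Mathlib

/-- The piecewise-linear map of the polygonal curve with vertices `v 0, …, v (m-1)`,
uniformly parameterized over `[0,1]`. -/
noncomputable def polyMap {E : Type*} [NormedAddCommGroup E] [NormedSpace ℝ E]
    (m : ℕ) (v : ℕ → E) (t : ℝ) : E :=
  let u : ℝ := t * ((m - 1 : ℕ) : ℝ)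
  let j : ℕ := min (Int.toNat ⌊u⌋) (m - 1)
  v j + (u - (j : ℝ)) • (v (min (j + 1) (m - 1)) - v j)

/-- The Fréchet distance between two curves `f g : ℝ → E` (regarded as parameterized
over `[0,1]`): the infimum of the bounds `r` achievable by pairs of continuous
nondecreasing surjective reparameterizations of `[0,1]`. -/
noncomputable def frechetDist {E : Type*} [PseudoMetricSpace E] (f g : ℝ → E) : ℝ :=
  sInf {r : ℝ | ∃ φ ψ : ℝ → ℝ,
      ContinuousOn φ (Set.Icc 0 1) ∧ MonotoneOn φ (Set.Icc 0 1) ∧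
      Set.MapsTo φ (Set.Icc 0 1) (Set.Icc 0 1) ∧ Set.SurjOn φ (Set.Icc 0 1) (Set.Icc 0 1) ∧
      ContinuousOn ψ (Set.Icc 0 1) ∧ MonotoneOn ψ (Set.Icc 0 1) ∧
      Set.MapsTo ψ (Set.Icc 0 1) (Set.Icc 0 1) ∧ Set.SurjOn ψ (Set.Icc 0 1) (Set.Icc 0 1) ∧
      ∀ t ∈ Set.Icc (0:ℝ) 1, dist (f (φ t)) (g (ψ t)) ≤ r}

section Aux

variable {E : Type*} [NormedAddCommGroup E] [NormedSpace ℝ E]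

lemma polyMap_two (v : ℕ → E) {s : ℝ} (h0 : 0 ≤ s) (h1 : s ≤ 1) :
    polyMap 2 v s = v 0 + s • (v 1 - v 0) := by
  rcases eq_or_lt_of_le h1 with rfl | h1
  · norm_num [polyMap]
  · have hfl : ⌊s⌋ = 0 := Int.floor_eq_zero_iff.2 ⟨h0, h1⟩
    norm_num [polyMap, hfl]

lemma polyMap_three_zero (v : ℕ → E) : polyMap 3 v 0 = v 0 := by
  norm_num [polyMap]

lemma polyMap_three_half (v : ℕ → E) : polyMap 3 v (1/2) = v 1 := by
  norm_num [polyMap]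

lemma polyMap_three_one (v : ℕ → E) : polyMap 3 v 1 = v 2 := by
  have h2 : Int.toNat 2 = 2 := rfl
  norm_num [polyMap, h2]

/-- On `[0,1]`, `polyMap m v t` is a point on a segment between two vertices. -/
lemma polyMap_repr (m : ℕ) (v : ℕ → E) {t : ℝ} (h0 : 0 ≤ t) (h1 : t ≤ 1) :
    ∃ i k : ℕ, ∃ s : ℝ, 0 ≤ s ∧ s ≤ 1 ∧ polyMap m v t = v i + s • (v k - v i) := by
  set u : ℝ := t * ((m - 1 : ℕ) : ℝ) with hu
  have hu0 : 0 ≤ u := mul_nonneg h0 (Nat.cast_nonneg _)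
  have hum : u ≤ ((m - 1 : ℕ) : ℝ) := by
    calc u ≤ 1 * ((m - 1 : ℕ) : ℝ) :=
          mul_le_mul_of_nonneg_right h1 (Nat.cast_nonneg _)
      _ = ((m - 1 : ℕ) : ℝ) := one_mul _
  set j : ℕ := min (Int.toNat ⌊u⌋) (m - 1) with hj
  refine ⟨j, min (j + 1) (m - 1), u - (j : ℝ), ?_, ?_, rfl⟩
  · have h1' : (j : ℝ) ≤ ((Int.toNat ⌊u⌋ : ℕ) : ℝ) := by
      exact_mod_cast Nat.cast_le.2 (min_le_left _ _)
    have h2' : ((Int.toNat ⌊u⌋ : ℕ) : ℝ) = ((⌊u⌋ : ℤ) : ℝ) := by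
      exact_mod_cast congrArg (Int.cast : ℤ → ℝ) (Int.toNat_of_nonneg (Int.floor_nonneg.2 hu0))
    have h3' : ((⌊u⌋ : ℤ) : ℝ) ≤ u := Int.floor_le u
    linarith
  · rcases min_cases (Int.toNat ⌊u⌋) (m - 1) with ⟨hmin, _⟩ | ⟨hmin, hle⟩
    · have hjq : (j : ℝ) = ((⌊u⌋ : ℤ) : ℝ) := by
        rw [hj, hmin]
        exact_mod_cast congrArg (Int.cast : ℤ → ℝ) (Int.toNat_of_nonneg (Int.floor_nonneg.2 hu0))
      have := Int.lt_floor_add_one u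
      rw [hjq]; linarith
    · have hjq : (j : ℕ) = m - 1 := by rw [hj, hmin]
      have : u ≤ (j : ℝ) := by rw [hjq]; exact hum
      linarith

end Aux

/-- Key geometric lemma: if the three vertices `a b c` are each within `r` of
points `x + s•(y-x)` on the segment, appearing in monotone order `sa ≤ s0 ≤ sc`,
then `b` is within `2r` of the segment `[a,c]`. -/
lemma key_lemma {E : Type*} [NormedAddCommGroup E] [NormedSpace ℝ E]
    (a b c x y : E) (r sa s0 sc : ℝ) (h1 : sa ≤ s0) (h2 : s0 ≤ sc)
    (ha : dist a (x + sa • (y - x)) ≤ r)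
    (hb : dist b (x + s0 • (y - x)) ≤ r)
    (hc : dist c (x + sc • (y - x)) ≤ r) :
    Metric.infDist b (segment ℝ a c) ≤ 2 * r := by
  rcases eq_or_lt_of_le (h1.trans h2) with heq | hlt
  · -- degenerate: sa = s0 = sc
    have hs0 : s0 = sa := le_antisymm (heq ▸ h2) h1
    have h3 : Metric.infDist b (segment ℝ a c) ≤ dist b a :=
      Metric.infDist_le_dist_of_mem (left_mem_segment ℝ a c)
    have h4 : dist b a ≤ dist b (x + s0 • (y - x)) + dist (x + s0 • (y - x)) a := dist_triangle _ _ _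
    have h5 : dist (x + s0 • (y - x)) a ≤ r := by
      rw [dist_comm, hs0]; exact ha
    linarith
  · set l : ℝ := (s0 - sa) / (sc - sa) with hl
    have hne : sc - sa ≠ 0 := sub_ne_zero_of_ne hlt.ne'
    have hl0 : 0 ≤ l := div_nonneg (by linarith) (by linarith)
    have hl1 : l ≤ 1 := (div_le_one (by linarith)).2 (by linarith)
    have hq : (1 - l) • a + l • c ∈ segment ℝ a c := ⟨1 - l, l, by linarith, hl0, by ring, rfl⟩
    have hs0eq : s0 = (1 - l) * sa + l * sc := by
      field_simp [hl]
      have h' : l * (sc - sa) = s0 - sa := by rw [hl]; field_simp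
      linear_combination -h'
    have hrep : x + s0 • (y - x) = (1 - l) • (x + sa • (y - x)) + l • (x + sc • (y - x)) := by
      rw [hs0eq]
      module
    have hd : dist (x + s0 • (y - x)) ((1 - l) • a + l • c) ≤ r := by
      rw [hrep, dist_eq_norm]
      have heq2 : (1 - l) • (x + sa • (y - x)) + l • (x + sc • (y - x)) - ((1 - l) • a + l • c)
          = (1 - l) • ((x + sa • (y - x)) - a) + l • ((x + sc • (y - x)) - c) := by module
      rw [heq2]
      have hna : ‖(x + sa • (y - x)) - a‖ ≤ r := by rw [← dist_eq_norm, dist_comm]; exact ha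
      have hnc : ‖(x + sc • (y - x)) - c‖ ≤ r := by rw [← dist_eq_norm, dist_comm]; exact hc
      calc ‖(1 - l) • ((x + sa • (y - x)) - a) + l • ((x + sc • (y - x)) - c)‖
          ≤ ‖(1 - l) • ((x + sa • (y - x)) - a)‖ + ‖l • ((x + sc • (y - x)) - c)‖ :=
            norm_add_le _ _
        _ = (1 - l) * ‖(x + sa • (y - x)) - a‖ + l * ‖(x + sc • (y - x)) - c‖ := by
            rw [norm_smul, norm_smul, Real.norm_of_nonneg (by linarith : (0:ℝ) ≤ 1 - l),
              Real.norm_of_nonneg hl0]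
        _ ≤ (1 - l) * r + l * r := by
            have := mul_le_mul_of_nonneg_left hna (by linarith : (0:ℝ) ≤ 1 - l)
            have := mul_le_mul_of_nonneg_left hnc hl0
            linarith
        _ = r := by ring
    have h3 : Metric.infDist b (segment ℝ a c) ≤ dist b ((1 - l) • a + l • c) :=
      Metric.infDist_le_dist_of_mem hq
    have h4 : dist b ((1 - l) • a + l • c)
        ≤ dist b (x + s0 • (y - x)) + dist (x + s0 • (y - x)) ((1 - l) • a + l • c) :=
      dist_triangle _ _ _
    linarith

theorem stmt6 (d : ℕ) (a b c x y : EuclideanSpace ℝ (Fin d)) :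
    (1 / 2 : ℝ) * Metric.infDist b (segment ℝ a c) ≤
      frechetDist (polyMap 3 (fun i => if i = 0 then a else if i = 1 then b else c))
        (polyMap 2 (fun i => if i = 0 then x else y)) := by
  set vf : ℕ → EuclideanSpace ℝ (Fin d) := fun i => if i = 0 then a else if i = 1 then b else c
    with hvf
  set vg : ℕ → EuclideanSpace ℝ (Fin d) := fun i => if i = 0 then x else y with hvg
  have hvf0 : vf 0 = a := rfl
  have hvf1 : vf 1 = b := rfl
  have hvf2 : vf 2 = c := rfl
  have hvg0 : vg 0 = x := rfl
  have hvg1 : vg 1 = y := rfl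
  apply le_csInf
  · -- the set of achievable bounds is nonempty
    refine ⟨3 * (‖a‖ + ‖b‖ + ‖c‖) + 3 * (‖x‖ + ‖y‖), id, id, continuousOn_id,
      monotoneOn_id, Set.mapsTo_id _, Set.surjOn_id _, continuousOn_id,
      monotoneOn_id, Set.mapsTo_id _, Set.surjOn_id _, ?_⟩
    intro t ht
    have hvfb : ∀ i, ‖vf i‖ ≤ ‖a‖ + ‖b‖ + ‖c‖ := by
      intro i
      have na := norm_nonneg a; have nb := norm_nonneg b; have nc := norm_nonneg c
      simp only [hvf]
      split_ifs <;> linarith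
    have hvgb : ∀ i, ‖vg i‖ ≤ ‖x‖ + ‖y‖ := by
      intro i
      have nx := norm_nonneg x; have ny := norm_nonneg y
      simp only [hvg]
      split_ifs <;> linarith
    obtain ⟨i, k, s, hs0, hs1, hf⟩ := polyMap_repr 3 vf ht.1 ht.2
    obtain ⟨i', k', s', hs0', hs1', hg⟩ := polyMap_repr 2 vg ht.1 ht.2
    have hfb : ‖polyMap 3 vf (id t)‖ ≤ 3 * (‖a‖ + ‖b‖ + ‖c‖) := by
      simp only [id]
      rw [hf]
      have h1 : ‖vf i + s • (vf k - vf i)‖ ≤ ‖vf i‖ + s * ‖vf k - vf i‖ := by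
        calc ‖vf i + s • (vf k - vf i)‖ ≤ ‖vf i‖ + ‖s • (vf k - vf i)‖ := norm_add_le _ _
          _ = ‖vf i‖ + s * ‖vf k - vf i‖ := by rw [norm_smul, Real.norm_of_nonneg hs0]
      have h2 : ‖vf k - vf i‖ ≤ (‖a‖ + ‖b‖ + ‖c‖) + (‖a‖ + ‖b‖ + ‖c‖) :=
        (norm_sub_le _ _).trans (add_le_add (hvfb k) (hvfb i))
      nlinarith [hvfb i, norm_nonneg (vf k - vf i)]
    have hgb : ‖polyMap 2 vg (id t)‖ ≤ 3 * (‖x‖ + ‖y‖) := by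
      simp only [id]
      rw [hg]
      have h1 : ‖vg i' + s' • (vg k' - vg i')‖ ≤ ‖vg i'‖ + s' * ‖vg k' - vg i'‖ := by
        calc ‖vg i' + s' • (vg k' - vg i')‖ ≤ ‖vg i'‖ + ‖s' • (vg k' - vg i')‖ := norm_add_le _ _
          _ = ‖vg i'‖ + s' * ‖vg k' - vg i'‖ := by rw [norm_smul, Real.norm_of_nonneg hs0']
      have h2 : ‖vg k' - vg i'‖ ≤ (‖x‖ + ‖y‖) + (‖x‖ + ‖y‖) :=
        (norm_sub_le _ _).trans (add_le_add (hvgb k') (hvgb i'))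
      nlinarith [hvgb i', norm_nonneg (vg k' - vg i')]
    calc dist (polyMap 3 vf (id t)) (polyMap 2 vg (id t))
        ≤ ‖polyMap 3 vf (id t)‖ + ‖polyMap 2 vg (id t)‖ := by
          rw [dist_eq_norm]; exact norm_sub_le _ _
      _ ≤ 3 * (‖a‖ + ‖b‖ + ‖c‖) + 3 * (‖x‖ + ‖y‖) := add_le_add hfb hgb
  · -- every achievable bound is at least half the distance from b to [a,c]
    rintro r ⟨φ, ψ, _, hφm, _, hφsurj, _, hψm, hψmap, _, hbound⟩
    obtain ⟨ta, hta, hφa⟩ := hφsurj (Set.left_mem_Icc.2 zero_le_one)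
    obtain ⟨t0, ht0, hφ0⟩ := hφsurj (show (1/2 : ℝ) ∈ Set.Icc 0 1 by norm_num)
    obtain ⟨tc, htc, hφc⟩ := hφsurj (Set.right_mem_Icc.2 zero_le_one)
    have hta0 : ta ≤ t0 := by
      by_contra h
      push_neg at h
      have := hφm ht0 hta h.le
      rw [hφa, hφ0] at this
      norm_num at this
    have ht0c : t0 ≤ tc := by
      by_contra h
      push_neg at h
      have := hφm htc ht0 h.le
      rw [hφc, hφ0] at this
      norm_num at this
    have hsa0 : ψ ta ≤ ψ t0 := hψm hta ht0 hta0
    have hs0c : ψ t0 ≤ ψ tc := hψm ht0 htc ht0c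
    have hma := hψmap hta
    have hm0 := hψmap ht0
    have hmc := hψmap htc
    have ha : dist a (x + ψ ta • (y - x)) ≤ r := by
      have := hbound ta hta
      rwa [hφa, polyMap_three_zero, hvf0, polyMap_two vg hma.1 hma.2, hvg0, hvg1] at this
    have hb : dist b (x + ψ t0 • (y - x)) ≤ r := by
      have := hbound t0 ht0
      rwa [hφ0, polyMap_three_half, hvf1, polyMap_two vg hm0.1 hm0.2, hvg0, hvg1] at this
    have hc : dist c (x + ψ tc • (y - x)) ≤ r := by
      have := hbound tc htc
      rwa [hφc, polyMap_three_one, hvf2, polyMap_two vg hmc.1 hmc.2, hvg0, hvg1] at this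
    have := key_lemma a b c x y r (ψ ta) (ψ t0) (ψ tc) hsa0 hs0c ha hb hc
    linarith
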